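/- Let φ be the substitution on {0,1} with φ(0) = 1, φ(1) = 100, u_n = φ^n(1), v_0 = 00 and v_n = u_{n−1}u_{n−1} for n ≥ 1. For every n ∈ ℕ, the infinite word u_n \overline{v_n} (the word u_n followed by the periodic repetition of v_n) is an alternate Lyndon word. -/

import Mathlib

open Filter Topology

/-- Alternate (Ito–Sadahiro) strict order on infinite sequences (0-indexed: entry `i`
is the `(i+1)`-th letter `x_{i+1}` of the paper). `altLt x y` iff at the first index
where they differ the comparison alternates with the parity of the index:
`(-1)^k (x_k - y_k) < 0` in 1-based indexing. -/
def altLt (x y : ℕ → ℕ) : Prop :=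
  ∃ k : ℕ, (∀ i < k, x i = y i) ∧ (if Even k then y k < x k else x k < y k)

def altLe (x y : ℕ → ℕ) : Prop := x = y ∨ altLt x y

def shiftSeq (x : ℕ → ℕ) (k : ℕ) : ℕ → ℕ := fun i => x (k + i)

/-- An alternate Lyndon word: smaller (in the alternate order) than all of its shifts. -/
def IsAltLyndon (d : ℕ → ℕ) : Prop := ∀ k : ℕ, altLe d (shiftSeq d k)

/-- The Lyndon system associated to `d`: sequences over the alphabet `{0, …, d_1}`
all of whose shifts dominate `d` in the alternate order. -/
def LyndonSystem (d : ℕ → ℕ) : Set (ℕ → ℕ) :=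
  {x | (∀ i, x i ≤ d 0) ∧ ∀ k : ℕ, altLe d (shiftSeq x k)}

def IsFactorOf (w : List ℕ) (x : ℕ → ℕ) : Prop :=
  ∃ k : ℕ, w = (List.range w.length).map (fun i => x (k + i))

/-- The language of the Lyndon system: finite factors of its elements. -/
def LyndonLang (d : ℕ → ℕ) : Set (List ℕ) :=
  {w | ∃ x ∈ LyndonSystem d, IsFactorOf w x}

/-- `Hword d n` is the number of words of length `n` in the language `L_M`. -/
noncomputable def Hword (d : ℕ → ℕ) (n : ℕ) : ℕ :=
  Set.ncard {w : List ℕ | w ∈ LyndonLang d ∧ w.length = n}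

/-- The topological entropy of the Lyndon system of `d` equals `h`,
i.e. `lim_{n→∞} (log H_n)/n = h`. -/
def EntropyIs (d : ℕ → ℕ) (h : ℝ) : Prop :=
  Filter.Tendsto (fun n : ℕ => Real.log (Hword d n) / n) Filter.atTop (nhds h)

/-- The substitution `φ` on letters: `φ(0) = 1`, `φ(1) = 100`. -/
def phiL (a : ℕ) : List ℕ := if a = 0 then [1] else [1, 0, 0]
/-- `φ` extended to words. -/
def phiW (w : List ℕ) : List ℕ := w.flatMap phiL
/-- `uW n = φ^n(1)`. -/
def uW (n : ℕ) : List ℕ := phiW^[n] [1]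
/-- The infinite fixed point `φ^∞(1)` (each `uW n` is a prefix of `uW (n+1)`,
and `|uW (i+1)| > i`, so the definition below gives the limit word). -/
def phiInf : ℕ → ℕ := fun i => (uW (i + 1)).getD i 0

/-- The periodic infinite word `\overline{w}` associated to a finite word `w`. -/
def periodicSeq (w : List ℕ) : ℕ → ℕ := fun i => w.getD (i % w.length) 0
/-- The infinite word `p \overline{w}`: the finite word `p` followed by the
periodic repetition of `w`. -/
def prefixPeriodic (p w : List ℕ) : ℕ → ℕ :=
  fun i => if i < p.length then p.getD i 0 else w.getD ((i - p.length) % w.length) 0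

/-- `vW 0 = 00`, `vW n = u_{n-1} u_{n-1}` for `n ≥ 1`. -/
def vW : ℕ → List ℕ
  | 0 => [0, 0]
  | n + 1 => uW n ++ uW n

namespace Stmt6Aux

def prefList (x : ℕ → ℕ) (n : ℕ) : List ℕ := (List.range n).map x
def Sx (x : ℕ → ℕ) (n : ℕ) : ℕ := (phiW (prefList x n)).length
def IsPref (p : List ℕ) (y : ℕ → ℕ) : Prop := ∀ i < p.length, y i = p.getD i 0
def PhiImage (x y : ℕ → ℕ) : Prop := ∀ n, IsPref (phiW (prefList x n)) y
def Bin (x : ℕ → ℕ) : Prop := ∀ i, x i ≤ 1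

lemma phiL_length (a : ℕ) : (phiL a).length = 1 ∨ (phiL a).length = 3 := by
  unfold phiL; split <;> simp

lemma phiL_length_pos (a : ℕ) : 0 < (phiL a).length := by
  rcases phiL_length a with h | h <;> omega

lemma phiL_length_odd (a : ℕ) : ¬ Even ((phiL a).length) := by
  rcases phiL_length a with h | h <;> rw [h] <;> decide

lemma phiL_getD_zero (a : ℕ) : (phiL a).getD 0 0 = 1 := by
  unfold phiL; split <;> rfl

lemma phiW_append (l l' : List ℕ) : phiW (l ++ l') = phiW l ++ phiW l' :=
  List.flatMap_append

lemma phiW_singleton (a : ℕ) : phiW [a] = phiL a := by simp [phiW]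

lemma prefList_succ (x : ℕ → ℕ) (n : ℕ) : prefList x (n+1) = prefList x n ++ [x n] := by
  unfold prefList; rw [List.range_succ, List.map_append]; rfl

lemma prefList_add (x : ℕ → ℕ) (m n : ℕ) :
    prefList x (m + n) = prefList x m ++ prefList (shiftSeq x m) n := by
  unfold prefList
  rw [List.range_add, List.map_append, List.map_map]
  rfl

lemma Sx_zero (x : ℕ → ℕ) : Sx x 0 = 0 := rfl

lemma Sx_succ (x : ℕ → ℕ) (n : ℕ) : Sx x (n+1) = Sx x n + (phiL (x n)).length := by
  unfold Sx
  rw [prefList_succ, phiW_append, List.length_append, phiW_singleton]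

lemma Sx_lt_succ (x : ℕ → ℕ) (n : ℕ) : Sx x n < Sx x (n+1) := by
  rw [Sx_succ]; have := phiL_length_pos (x n); omega

lemma self_le_Sx (x : ℕ → ℕ) (n : ℕ) : n ≤ Sx x n := by
  induction n with
  | zero => exact Nat.zero_le _
  | succ n ih => have := Sx_lt_succ x n; omega

lemma Sx_cover (x : ℕ → ℕ) (m : ℕ) : ∃ j, Sx x j ≤ m ∧ m < Sx x (j+1) := by
  induction m with
  | zero => exact ⟨0, le_refl _, Sx_lt_succ x 0⟩
  | succ m ih =>
    obtain ⟨j, h1, h2⟩ := ih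
    by_cases h : m + 1 < Sx x (j+1)
    · exact ⟨j, by omega, h⟩
    · exact ⟨j+1, by omega, by have := Sx_lt_succ x (j+1); omega⟩

lemma Sx_parity (x : ℕ → ℕ) (n : ℕ) : Even (Sx x n) ↔ Even n := by
  induction n with
  | zero => simp [Sx_zero]
  | succ n ih =>
    rw [Sx_succ, Nat.even_add, Nat.even_add_one, ← ih]
    have h := phiL_length_odd (x n)
    tauto

lemma getD_append_left_length (A B : List ℕ) (t : ℕ) :
    (A ++ B).getD (A.length + t) 0 = B.getD t 0 := by
  rw [List.getD_append_right _ _ _ _ (Nat.le_add_right _ _), Nat.add_sub_cancel_left]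

lemma IsPref.mono {A B : List ℕ} {y : ℕ → ℕ} (h : IsPref (A ++ B) y) : IsPref A y := by
  intro i hi
  rw [h i (by rw [List.length_append]; omega), List.getD_append _ _ _ _ hi]

lemma PhiImage.getD {x y : ℕ → ℕ} (hxy : PhiImage x y) (n : ℕ) {m : ℕ} (hm : m < Sx x n) :
    y m = (phiW (prefList x n)).getD m 0 := hxy n m hm

lemma PhiImage.block {x y : ℕ → ℕ} (hxy : PhiImage x y) (j t : ℕ)
    (ht : t < (phiL (x j)).length) :
    y (Sx x j + t) = (phiL (x j)).getD t 0 := by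
  have hlt : Sx x j + t < Sx x (j+1) := by rw [Sx_succ]; omega
  have h := hxy.getD (j+1) hlt
  rw [prefList_succ, phiW_append, phiW_singleton] at h
  rw [h]
  exact getD_append_left_length _ _ t

lemma PhiImage.head {x y : ℕ → ℕ} (hxy : PhiImage x y) (j : ℕ) : y (Sx x j) = 1 := by
  have h := hxy.block j 0 (phiL_length_pos (x j))
  rw [phiL_getD_zero] at h
  simpa using h

lemma phiW_mem_le_one {a : ℕ} {w : List ℕ} (h : a ∈ phiW w) : a ≤ 1 := by
  rw [phiW, List.mem_flatMap] at h
  obtain ⟨b, _, hb⟩ := h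
  unfold phiL at hb
  split at hb <;> simp at hb <;> omega

lemma PhiImage.bin {x y : ℕ → ℕ} (hxy : PhiImage x y) : Bin y := by
  intro m
  have hm : m < Sx x (m+1) := lt_of_lt_of_le (Nat.lt_succ_self m) (self_le_Sx x (m+1))
  rw [hxy.getD (m+1) hm, List.getD_eq_getElem _ _ hm]
  exact phiW_mem_le_one (List.getElem_mem _)

lemma PhiImage.unique {x y w : ℕ → ℕ} (hxy : PhiImage x y) (hxw : PhiImage x w) : y = w := by
  funext m
  have hm : m < Sx x (m+1) := lt_of_lt_of_le (Nat.lt_succ_self m) (self_le_Sx x (m+1))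
  rw [hxy.getD (m+1) hm, hxw.getD (m+1) hm]

lemma PhiImage.shift {x y : ℕ → ℕ} (hxy : PhiImage x y) (j : ℕ) :
    PhiImage (shiftSeq x j) (shiftSeq y (Sx x j)) := by
  intro n i hi
  have key : phiW (prefList x (j + n)) = phiW (prefList x j) ++ phiW (prefList (shiftSeq x j) n) := by
    rw [prefList_add, phiW_append]
  have hlen : Sx x (j + n) = Sx x j + (phiW (prefList (shiftSeq x j) n)).length := by
    show (phiW (prefList x (j+n))).length = _
    rw [key, List.length_append]
    rfl
  have h := hxy.getD (j + n) (show Sx x j + i < Sx x (j+n) by omega)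
  rw [key] at h
  rw [show ((phiW (prefList x j) ++ phiW (prefList (shiftSeq x j) n)).getD (Sx x j + i) 0
        = (phiW (prefList (shiftSeq x j) n)).getD i 0) from getD_append_left_length _ _ i] at h
  exact h

lemma phi_mono {x z y w : ℕ → ℕ} (hx : Bin x) (hz : Bin z)
    (hxy : PhiImage x y) (hzw : PhiImage z w) (h : altLe x z) : altLe y w := by
  rcases h with rfl | ⟨k, hagree, hk⟩
  · exact Or.inl (hxy.unique hzw)
  · have hpl : prefList x k = prefList z k := by
      unfold prefList
      apply List.map_congr_left
      intro i hi
      exact hagree i (List.mem_range.mp hi)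
    have hS : Sx x k = Sx z k := by unfold Sx; rw [hpl]
    have hyw : ∀ m < Sx x k, y m = w m := by
      intro m hm
      rw [hxy.getD k hm, hzw.getD k (hS ▸ hm), hpl]
    have hyL : y (Sx x k) = 1 := hxy.head k
    have hwL : w (Sx x k) = 1 := by rw [hS]; exact hzw.head k
    have hagree' : ∀ i < Sx x k + 1, y i = w i := by
      intro i hi
      rcases Nat.lt_or_ge i (Sx x k) with h' | h'
      · exact hyw i h'
      · have : i = Sx x k := by omega
        rw [this, hyL, hwL]
    by_cases hek : Even k
    · rw [if_pos hek] at hk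
      have hxk : x k = 1 := by have := hx k; omega
      have hzk : z k = 0 := by omega
      have hy1 : y (Sx x k + 1) = 0 := by
        have h1 := hxy.block k 1 (by rw [phiL, if_neg (by omega)]; decide)
        rw [phiL, if_neg (by omega : ¬ x k = 0)] at h1
        simpa using h1
      have hw1 : w (Sx x k + 1) = 1 := by
        have hs : Sx z (k+1) = Sx x k + 1 := by
          rw [Sx_succ, ← hS, phiL, if_pos hzk]; rfl
        rw [← hs]
        exact hzw.head (k+1)
      refine Or.inr ⟨Sx x k + 1, hagree', ?_⟩
      have hodd : ¬ Even (Sx x k + 1) := by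
        have hL' : Even (Sx x k) := (Sx_parity x k).mpr hek
        simp [Nat.even_add_one, hL']
      rw [if_neg hodd, hy1, hw1]
      omega
    · rw [if_neg hek] at hk
      have hzk : z k = 1 := by have := hz k; omega
      have hxk : x k = 0 := by omega
      have hw1 : w (Sx x k + 1) = 0 := by
        have h1 := hzw.block k 1 (by rw [phiL, if_neg (by omega)]; decide)
        rw [phiL, if_neg (by omega : ¬ z k = 0)] at h1
        rw [← hS] at h1
        simpa using h1
      have hy1 : y (Sx x k + 1) = 1 := by
        have hs : Sx x (k+1) = Sx x k + 1 := by
          rw [Sx_succ, phiL, if_pos hxk]; rfl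
        rw [← hs]
        exact hxy.head (k+1)
      refine Or.inr ⟨Sx x k + 1, hagree', ?_⟩
      have heven : Even (Sx x k + 1) := by
        have hL' : ¬ Even (Sx x k) := fun hh => hek ((Sx_parity x k).mp hh)
        simpa [Nat.even_add_one] using hL'
      rw [if_pos heven, hy1, hw1]
      omega

lemma phi_lyndon {x y : ℕ → ℕ} (hx : Bin x) (hL : IsAltLyndon x) (hxy : PhiImage x y) :
    IsAltLyndon y := by
  intro k
  obtain ⟨j, hj1, hj2⟩ := Sx_cover x k
  rcases Nat.eq_or_lt_of_le hj1 with heq | hlt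
  · rw [← heq]
    exact phi_mono hx (fun i => hx (j + i)) hxy (hxy.shift j) (hL j)
  · have hxj : x j ≠ 0 := by
      intro h0
      rw [Sx_succ, phiL, if_pos h0] at hj2
      simp at hj2
      omega
    have hlen : (phiL (x j)).length = 3 := by
      rw [phiL, if_neg hxj]; rfl
    have hyk : y k = 0 := by
      have ht : k - Sx x j < (phiL (x j)).length := by
        rw [Sx_succ] at hj2; omega
      have hb := hxy.block j (k - Sx x j) ht
      rw [show Sx x j + (k - Sx x j) = k by omega] at hb
      rw [hb, phiL, if_neg hxj]
      have hr : k - Sx x j = 1 ∨ k - Sx x j = 2 := by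
        rw [phiL, if_neg hxj] at ht
        simp at ht
        omega
      rcases hr with h | h <;> rw [h] <;> rfl
    refine Or.inr ⟨0, fun i hi => absurd hi (by omega), ?_⟩
    rw [if_pos (Even.zero)]
    show shiftSeq y k 0 < y 0
    have h0 : y 0 = 1 := hxy.head 0
    have : shiftSeq y k 0 = y k := by simp [shiftSeq]
    rw [this, hyk, h0]
    omega
lemma length_phiW_pos {w : List ℕ} (hw : w ≠ []) : 0 < (phiW w).length := by
  cases w with
  | nil => simp at hw
  | cons a l =>
    rw [show phiW (a :: l) = phiL a ++ phiW l from List.flatMap_cons .., List.length_append]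
    have := phiL_length_pos a
    omega

lemma flatten_replicate_getD (W : List ℕ) :
    ∀ (t i : ℕ), i < t * W.length →
      ((List.replicate t W).flatten).getD i 0 = W.getD (i % W.length) 0 := by
  intro t
  induction t with
  | zero => intro i hi; simp at hi
  | succ t ih =>
    intro i hi
    rw [List.replicate_succ, List.flatten_cons]
    rcases Nat.lt_or_ge i W.length with h | h
    · rw [List.getD_append _ _ _ _ h, Nat.mod_eq_of_lt h]
    · rw [List.getD_append_right _ _ _ _ h,
        ih (i - W.length) (by rw [Nat.succ_mul] at hi; omega),
        Nat.mod_eq_sub_mod h]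

lemma length_flatten_replicate (W : List ℕ) (t : ℕ) :
    ((List.replicate t W).flatten).length = t * W.length := by
  induction t with
  | zero => simp
  | succ t ih =>
    rw [List.replicate_succ, List.flatten_cons, List.length_append, ih, Nat.succ_mul]
    omega

lemma phiW_flatten_replicate (W : List ℕ) (t : ℕ) :
    phiW ((List.replicate t W).flatten) = (List.replicate t (phiW W)).flatten := by
  induction t with
  | zero => rfl
  | succ t ih =>
    rw [List.replicate_succ, List.replicate_succ, List.flatten_cons, List.flatten_cons,
      phiW_append, ih]

lemma prefList_prefixPeriodic_base (P W : List ℕ) :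
    prefList (prefixPeriodic P W) P.length = P := by
  apply List.ext_getElem
  · simp [prefList]
  · intro n h1 h2
    simp only [prefList, List.getElem_map, List.getElem_range]
    simp only [prefixPeriodic]
    rw [if_pos h2]
    exact List.getD_eq_getElem _ _ h2

lemma prefList_shift_block (P W : List ℕ) (t : ℕ) :
    prefList (shiftSeq (prefixPeriodic P W) (P.length + t * W.length)) W.length = W := by
  apply List.ext_getElem
  · simp [prefList]
  · intro n h1 h2
    simp only [prefList, List.getElem_map, List.getElem_range]
    simp only [shiftSeq, prefixPeriodic]
    rw [if_neg (by omega)]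
    have h3 : P.length + t * W.length + n - P.length = t * W.length + n := by omega
    rw [h3, mul_comm, Nat.mul_add_mod, Nat.mod_eq_of_lt h2]
    exact List.getD_eq_getElem _ _ h2

lemma prefList_prefixPeriodic (P W : List ℕ) (t : ℕ) :
    prefList (prefixPeriodic P W) (P.length + t * W.length)
      = P ++ (List.replicate t W).flatten := by
  induction t with
  | zero => simpa using prefList_prefixPeriodic_base P W
  | succ t ih =>
    have h : P.length + (t+1) * W.length = (P.length + t * W.length) + W.length := by ring
    rw [h, prefList_add, ih, prefList_shift_block,
      List.replicate_succ', List.flatten_append, List.flatten_cons, List.flatten_nil,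
      List.append_nil, List.append_assoc]

lemma phiImage_prefixPeriodic (P W : List ℕ) (hW : W ≠ []) :
    PhiImage (prefixPeriodic P W) (prefixPeriodic (phiW P) (phiW W)) := by
  intro n
  have hWpos : 0 < W.length := List.length_pos_iff.mpr hW
  have hWp : 0 < (phiW W).length := length_phiW_pos hW
  set x := prefixPeriodic P W with hxdef
  have hle : n ≤ P.length + n * W.length := by
    have : n ≤ n * W.length := Nat.le_mul_of_pos_right n hWpos
    omega
  have hsplit : prefList x (P.length + n * W.length)
      = prefList x n ++ prefList (shiftSeq x n) (P.length + n * W.length - n) := by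
    rw [← prefList_add]
    congr 1
    omega
  have key : IsPref (phiW (prefList x (P.length + n * W.length)))
      (prefixPeriodic (phiW P) (phiW W)) := by
    rw [hxdef, prefList_prefixPeriodic P W n, phiW_append, phiW_flatten_replicate]
    intro i hi
    rw [List.length_append, length_flatten_replicate] at hi
    rcases Nat.lt_or_ge i (phiW P).length with h | h
    · rw [List.getD_append _ _ _ _ h]
      simp only [prefixPeriodic]
      rw [if_pos h]
    · rw [List.getD_append_right _ _ _ _ h]
      simp only [prefixPeriodic]
      rw [if_neg (by omega)]
      exact (flatten_replicate_getD (phiW W) n (i - (phiW P).length) (by omega)).symm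
  rw [hsplit, phiW_append] at key
  exact key.mono

lemma phiW_uW (n : ℕ) : phiW (uW n) = uW (n+1) :=
  (Function.iterate_succ_apply' phiW n [1]).symm

lemma phiW_vW (n : ℕ) : phiW (vW n) = vW (n+1) := by
  cases n with
  | zero => decide
  | succ n =>
    show phiW (uW n ++ uW n) = uW (n+1) ++ uW (n+1)
    rw [phiW_append, phiW_uW]

lemma uW_ne_nil (n : ℕ) : uW n ≠ [] := by
  induction n with
  | zero => decide
  | succ n ih =>
    have := length_phiW_pos ih
    rw [phiW_uW] at this
    exact List.length_pos_iff.mp this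

lemma vW_ne_nil (n : ℕ) : vW n ≠ [] := by
  cases n with
  | zero => decide
  | succ n => simp [vW, uW_ne_nil]

lemma getD00 (m : ℕ) : ([0, 0] : List ℕ).getD m 0 = 0 := by
  rcases m with _ | _ | m <;> rfl

lemma uW_zero : uW 0 = [1] := rfl

lemma d0_lyndon : IsAltLyndon (prefixPeriodic (uW 0) (vW 0)) := by
  intro k
  cases k with
  | zero =>
    refine Or.inl (funext fun i => ?_)
    simp [shiftSeq]
  | succ k =>
    refine Or.inr ⟨0, fun i hi => absurd hi (by omega), ?_⟩
    rw [if_pos Even.zero]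
    show shiftSeq _ (k+1) 0 < _
    simp only [shiftSeq, Nat.add_zero]
    show prefixPeriodic (uW 0) (vW 0) (k+1) < prefixPeriodic (uW 0) (vW 0) 0
    rw [uW_zero, show vW 0 = [0,0] from rfl]
    simp only [prefixPeriodic, List.length_cons, List.length_nil]
    rw [if_neg (by omega), if_pos (by omega)]
    rw [getD00]
    decide

lemma d0_bin : Bin (prefixPeriodic (uW 0) (vW 0)) := by
  intro i
  show prefixPeriodic (uW 0) (vW 0) i ≤ 1
  rw [uW_zero, show vW 0 = [0,0] from rfl]
  simp only [prefixPeriodic, List.length_cons, List.length_nil]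
  split
  · rcases i with _ | i
    · decide
    · omega
  · rw [getD00]
    omega

end Stmt6Aux

/-- Proposition 4: for all `n`, the infinite word `u_n \overline{v_n}` is an
alternate Lyndon word. -/
theorem stmt6 (n : ℕ) : IsAltLyndon (prefixPeriodic (uW n) (vW n)) := by
  have main : ∀ m, IsAltLyndon (prefixPeriodic (uW m) (vW m)) ∧
      Stmt6Aux.Bin (prefixPeriodic (uW m) (vW m)) := by
    intro m
    induction m with
    | zero => exact ⟨Stmt6Aux.d0_lyndon, Stmt6Aux.d0_bin⟩
    | succ m ih =>
      have himg : Stmt6Aux.PhiImage (prefixPeriodic (uW m) (vW m))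
          (prefixPeriodic (uW (m+1)) (vW (m+1))) := by
        have h := Stmt6Aux.phiImage_prefixPeriodic (uW m) (vW m) (Stmt6Aux.vW_ne_nil m)
        rwa [Stmt6Aux.phiW_uW, Stmt6Aux.phiW_vW] at h
      exact ⟨Stmt6Aux.phi_lyndon ih.2 ih.1 himg, himg.bin⟩
  exact (main n).1
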